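/- Let P(λ) = Σ_{i=0}^k P_i λ^i with P_i ∈ ℝ^{n×n} be a matrix polynomial of degree k = ε + η + 1 with η ≤ ε, and let L(λ) be a kn × kn matrix pencil belonging to both G_{η+1}(P) and G_{k−η}(P). Then for every integer i with 1 ≤ i ≤ k − 2η, the pencil L(λ) belongs to G_{η+i}(P); that is, there exists α_i ∈ ℝ with ((Λ_{η+i−1}(λ)^T ⊗ I_n) ⊕ I_{(k−η−i)n})·L(λ)·((Λ_{k−η−i}(λ) ⊗ I_n) ⊕ I_{(η+i−1)n}) = (α_i·P(λ)) ⊕ 0_{(k−η−i)n × (η+i−1)n}. -/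

import Mathlib

open Matrix Polynomial
open scoped Kronecker

noncomputable section

/-- `Λ_j(λ)` as a `(j+1) × 1` matrix of real polynomials, with `i`-th entry `λ^{j-i}`. -/
def Lam (j : ℕ) : Matrix (Fin (j + 1)) (Fin 1) (Polynomial ℝ) :=
  Matrix.of fun i _ => X ^ (j - (i : ℕ))

/-- `L_κ(λ)`, the `κ × (κ+1)` pencil with `-1` on the diagonal and `λ` on the superdiagonal. -/
def Lk (κ : ℕ) : Matrix (Fin κ) (Fin (κ + 1)) (Polynomial ℝ) :=
  Matrix.of fun i j => if (j : ℕ) = (i : ℕ) then -1 else if (j : ℕ) = (i : ℕ) + 1 then X else 0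

/-- The matrix pencil `λ·A + B` as a matrix of real polynomials. -/
def pencilM {ρ γ : Type*} (A B : Matrix ρ γ ℝ) : Matrix ρ γ (Polynomial ℝ) :=
  Matrix.of fun i j => X * C (A i j) + C (B i j)

/-- The matrix polynomial `Σ_{i=0}^k Pc i · λ^i` as a matrix of real polynomials. -/
def polyOf (m n k : ℕ) (Pc : ℕ → Matrix (Fin m) (Fin n) ℝ) :
    Matrix (Fin m) (Fin n) (Polynomial ℝ) :=
  Matrix.of fun i j => ∑ t ∈ Finset.range (k + 1), X ^ t * C (Pc t i j)

/-- The flat `(n + ε'n) × kn` matrix `(Λ_{η'}(λ)ᵀ ⊗ I_n) ⊕ I_{ε'n}` (with `ε' = k - 1 - η'`),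
acting on the left in the block Kronecker ansatz equation. -/
def Eleft (n k η' : ℕ) : Matrix (Fin (k - η') × Fin n) (Fin k × Fin n) (Polynomial ℝ) :=
  Matrix.of fun p q =>
    if p.2 = q.2 ∧ (p.1 : ℕ) = 0 ∧ (q.1 : ℕ) ≤ η' then X ^ (η' - (q.1 : ℕ))
    else if p.2 = q.2 ∧ (q.1 : ℕ) = η' + (p.1 : ℕ) then 1
    else 0

/-- The flat `kn × (n + η'n)` matrix `(Λ_{ε'}(λ) ⊗ I_n) ⊕ I_{η'n}` (with `ε' = k - 1 - η'`),
acting on the right in the block Kronecker ansatz equation. -/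
def Eright (n k η' : ℕ) : Matrix (Fin k × Fin n) (Fin (η' + 1) × Fin n) (Polynomial ℝ) :=
  Matrix.of fun p q =>
    if p.2 = q.2 ∧ (q.1 : ℕ) = 0 ∧ (p.1 : ℕ) ≤ k - 1 - η' then X ^ (k - 1 - η' - (p.1 : ℕ))
    else if p.2 = q.2 ∧ (p.1 : ℕ) = (k - 1 - η') + (q.1 : ℕ) then 1
    else 0

/-- The right-hand side `(α · P(λ)) ⊕ 0` of the block Kronecker ansatz equation. -/
def GRHS (n k η' : ℕ) (α : ℝ) (Pm : Matrix (Fin n) (Fin n) (Polynomial ℝ)) :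
    Matrix (Fin (k - η') × Fin n) (Fin (η' + 1) × Fin n) (Polynomial ℝ) :=
  Matrix.of fun p q =>
    if (p.1 : ℕ) = 0 ∧ (q.1 : ℕ) = 0 then C α * Pm p.2 q.2 else 0

/-- Membership of the pencil `λ·p.1 + p.2` in the block Kronecker ansatz space
`G_{η'+1}(P)` for the `n × n` matrix polynomial with coefficients `Pc` of degree `k`. -/
def memG (n k η' : ℕ) (Pc : ℕ → Matrix (Fin n) (Fin n) ℝ)
    (p : Matrix (Fin k × Fin n) (Fin k × Fin n) ℝ ×
         Matrix (Fin k × Fin n) (Fin k × Fin n) ℝ) : Prop :=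
  ∃ α : ℝ,
    Eleft n k η' * pencilM p.1 p.2 * Eright n k η' = GRHS n k η' α (polyOf n n k Pc)

namespace Stmt13Aux

/-! ### Scalar layer -/

/-- The four scalar ansatz conditions. -/
def Cnd (μ ν : ℕ) (B : ℕ → ℕ → Polynomial ℝ) (ρ : Polynomial ℝ) : Prop :=
  (∑ t ∈ Finset.range (μ+1), X^(μ-t) * ∑ s ∈ Finset.range (ν+1), X^(ν-s) * B t s = ρ)
  ∧ (∀ b, ν < b → ∑ t ∈ Finset.range (μ+1), X^(μ-t) * B t b = 0)
  ∧ (∀ a, μ < a → ∑ s ∈ Finset.range (ν+1), X^(ν-s) * B a s = 0)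
  ∧ (∀ a b, μ < a → ν < b → B a b = 0)

lemma factorX (μ : ℕ) (g : ℕ → Polynomial ℝ) :
    ∑ t ∈ Finset.range (μ+1), X^(μ+1-t) * g t
      = X * ∑ t ∈ Finset.range (μ+1), X^(μ-t) * g t := by
  rw [Finset.mul_sum]
  refine Finset.sum_congr rfl fun t ht => ?_
  rw [Finset.mem_range] at ht
  rw [show μ+1-t = (μ-t)+1 by omega, pow_succ]
  ring

lemma nestswap (μ ν : ℕ) (B : ℕ → ℕ → Polynomial ℝ) :
    ∑ t ∈ Finset.range (μ+1), X^(μ-t) * ∑ s ∈ Finset.range (ν+1), X^(ν-s) * B t s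
      = ∑ s ∈ Finset.range (ν+1), X^(ν-s) * ∑ t ∈ Finset.range (μ+1), X^(μ-t) * B t s := by
  simp_rw [Finset.mul_sum]
  rw [Finset.sum_comm]
  exact Finset.sum_congr rfl fun s _ => Finset.sum_congr rfl fun t _ => by ring

/-- constant coefficient extraction -/
lemma eval0 (ν : ℕ) (x y : ℕ → ℝ)
    (h : ∑ s ∈ Finset.range (ν+1), X^(ν-s) * (X * C (x s) + C (y s)) = 0) :
    y ν = 0 := by
  have h0 := congrArg (Polynomial.eval 0) h
  simp only [Polynomial.eval_finset_sum, Polynomial.eval_mul, Polynomial.eval_pow,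
    Polynomial.eval_X, Polynomial.eval_add, Polynomial.eval_C, Polynomial.eval_zero,
    zero_mul, zero_add] at h0
  rw [Finset.sum_eq_single ν] at h0
  · simpa using h0
  · intro s hs hne
    rw [Finset.mem_range] at hs
    rw [zero_pow (by omega), zero_mul]
  · intro h; exact absurd (Finset.self_mem_range_succ ν) h

/-- coefficient chain relation -/
lemma chain (N : ℕ) (x y : ℕ → ℝ)
    (h : ∑ t ∈ Finset.range (N+1), X^(N-t) * (X * C (x t) + C (y t)) = 0)
    (a : ℕ) (ha1 : 1 ≤ a) (ha2 : a ≤ N) : x a + y (a-1) = 0 := by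
  have hrw : ∀ t, X^(N-t) * (X * C (x t) + C (y t))
      = C (x t) * X^((N-t)+1) + C (y t) * X^(N-t) := by
    intro t; rw [pow_succ]; ring
  simp_rw [hrw] at h
  have hc := congrArg (fun p => Polynomial.coeff p (N+1-a)) h
  simp only [Polynomial.finset_sum_coeff, Polynomial.coeff_add, Polynomial.coeff_C_mul,
    Polynomial.coeff_X_pow, Polynomial.coeff_zero, Finset.sum_add_distrib] at hc
  rw [Finset.sum_eq_single a, Finset.sum_eq_single (a-1)] at hc
  · rw [if_pos (by omega), if_pos (by omega), mul_one, mul_one] at hc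
    exact hc
  · intro t ht hne
    rw [Finset.mem_range] at ht
    rw [if_neg (by omega), mul_zero]
  · intro hmem; exact absurd (Finset.mem_range.mpr (by omega)) hmem
  · intro t ht hne
    rw [Finset.mem_range] at ht
    rw [if_neg (by omega), mul_zero]
  · intro hmem; exact absurd (Finset.mem_range.mpr (by omega)) hmem

lemma step (η ε m ν' : ℕ) (x y : ℕ → ℕ → ℝ) (ρ : Polynomial ℝ)
    (hm : η ≤ m) (hmε : m < ε) (hν' : ν' + 1 = ε + η - m)
    (hc : Cnd m (ν'+1) (fun a b => X * C (x a b) + C (y a b)) ρ)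
    (h2B : ∀ b, η < b → ∑ t ∈ Finset.range (ε+1), X^(ε-t) * (X * C (x t b) + C (y t b)) = 0)
    (h2D : ∀ a b, ε < a → η < b → (X * C (x a b) + C (y a b) : Polynomial ℝ) = 0) :
    Cnd (m+1) ν' (fun a b => X * C (x a b) + C (y a b)) ρ := by
  set B : ℕ → ℕ → Polynomial ℝ := fun a b => X * C (x a b) + C (y a b) with hB
  obtain ⟨hA, hB2, hC2, hD2⟩ := hc
  set ν : ℕ := ν' + 1 with hν
  have hνη : η < ν := by omega
  -- (i) y a ν = 0 for a > m
  have hy : ∀ a, m < a → y a ν = 0 := fun a ha => eval0 ν (x a) (y a) (hC2 a ha)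
  -- (ii) B a ν = 0 for a ≥ m+2
  have hxchain : ∀ a, 1 ≤ a → a ≤ ε → x a ν + y (a-1) ν = 0 :=
    chain ε (fun t => x t ν) (fun t => y t ν) (h2B ν hνη)
  have hBν : ∀ a, m + 1 < a → B a ν = 0 := by
    intro a ha
    by_cases hc : a ≤ ε
    · have h1 : y (a-1) ν = 0 := hy (a-1) (by omega)
      have h2 : x a ν = 0 := by have := hxchain a (by omega) hc; linarith
      simp [hB, h2, hy a (by omega)]
    · exact h2D a ν (by omega) hνη
  -- (iii) new B-condition
  have hB' : ∀ b, ν' < b → ∑ t ∈ Finset.range (m+2), X^(m+1-t) * B t b = 0 := by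
    intro b hb
    rcases eq_or_lt_of_le (show ν ≤ b by omega) with hbν | hbν
    · -- b = ν
      subst hbν
      have h0 := h2B ν hνη
      have hsplit := Finset.sum_Ico_consecutive (fun t => X^(ε-t) * B t ν)
        (Nat.zero_le (m+2)) (by omega : m+2 ≤ ε+1)
      rw [← Finset.range_eq_Ico, ← Finset.range_eq_Ico] at hsplit
      rw [← hsplit] at h0
      have hz : ∑ t ∈ Finset.Ico (m+2) (ε+1), X^(ε-t) * B t ν = 0 :=
        Finset.sum_eq_zero (fun t ht => by
          rw [Finset.mem_Ico] at ht
          rw [hBν t (by omega), mul_zero])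
      rw [hz, add_zero] at h0
      have hfac : (∑ t ∈ Finset.range (m+2), X^(ε-t) * B t ν)
          = X^(ε-m-1) * ∑ t ∈ Finset.range (m+2), X^(m+1-t) * B t ν := by
        rw [Finset.mul_sum]
        refine Finset.sum_congr rfl fun t ht => ?_
        rw [Finset.mem_range] at ht
        rw [← mul_assoc, ← pow_add, show ε-m-1 + (m+1-t) = ε - t by omega]
      rw [hfac] at h0
      exact (mul_eq_zero.mp h0).resolve_left (pow_ne_zero _ Polynomial.X_ne_zero)
    · -- b > ν
      rw [Finset.sum_range_succ]
      rw [show m+1-(m+1) = 0 by omega, pow_zero, one_mul, hD2 (m+1) b (by omega) (by omega),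
        add_zero]
      have := factorX m (fun t => B t b)
      rw [this, hB2 b (by omega), mul_zero]
  -- (iv) new C-condition
  have hC' : ∀ a, m + 1 < a → ∑ s ∈ Finset.range (ν'+1), X^(ν'-s) * B a s = 0 := by
    intro a ha
    have h0 := hC2 a (by omega)
    rw [Finset.sum_range_succ, show ν - ν = 0 by omega, pow_zero, one_mul,
      hBν a ha, add_zero] at h0
    rw [show (∑ s ∈ Finset.range (ν'+1), X^(ν-s) * B a s)
        = X * ∑ s ∈ Finset.range (ν'+1), X^(ν'-s) * B a s from factorX ν' (fun s => B a s)] at h0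
    exact (mul_eq_zero.mp h0).resolve_left Polynomial.X_ne_zero
  -- (v) new A-condition
  have hA' : ∑ t ∈ Finset.range (m+2), X^(m+1-t) * ∑ s ∈ Finset.range (ν'+1), X^(ν'-s) * B t s
      = ρ := by
    have key : X * (∑ t ∈ Finset.range (m+2), X^(m+1-t)
          * ∑ s ∈ Finset.range (ν'+1), X^(ν'-s) * B t s) = X * ρ := by
      have e1 : ∑ s ∈ Finset.range (ν+1), X^(ν-s) * ∑ t ∈ Finset.range (m+2), X^(m+1-t) * B t s
          = X * (∑ s ∈ Finset.range (ν'+1), X^(ν'-s) * ∑ t ∈ Finset.range (m+2), X^(m+1-t) * B t s) := by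
        rw [Finset.sum_range_succ, show ν - ν = 0 by omega, pow_zero, one_mul,
          hB' ν (by omega), add_zero]
        exact factorX ν' _
      have e2 : ∑ s ∈ Finset.range (ν+1), X^(ν-s) * ∑ t ∈ Finset.range (m+2), X^(m+1-t) * B t s
          = X * ρ := by
        have inner : ∀ s, (∑ t ∈ Finset.range (m+2), X^(m+1-t) * B t s)
            = X * (∑ t ∈ Finset.range (m+1), X^(m-t) * B t s) + B (m+1) s := by
          intro s
          rw [Finset.sum_range_succ, show m+1-(m+1) = 0 by omega, pow_zero, one_mul,
            factorX m (fun t => B t s)]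
        calc ∑ s ∈ Finset.range (ν+1), X^(ν-s) * ∑ t ∈ Finset.range (m+2), X^(m+1-t) * B t s
            = ∑ s ∈ Finset.range (ν+1), (X * (X^(ν-s) * ∑ t ∈ Finset.range (m+1), X^(m-t) * B t s)
                + X^(ν-s) * B (m+1) s) := by
              refine Finset.sum_congr rfl fun s _ => ?_
              rw [inner s]; ring
          _ = X * (∑ s ∈ Finset.range (ν+1), X^(ν-s) * ∑ t ∈ Finset.range (m+1), X^(m-t) * B t s)
                + ∑ s ∈ Finset.range (ν+1), X^(ν-s) * B (m+1) s := by
              rw [Finset.sum_add_distrib, Finset.mul_sum]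
          _ = X * ρ := by
              rw [hC2 (m+1) (by omega), add_zero, ← nestswap, hA]
      rw [← e2, e1, nestswap]
    exact mul_left_cancel₀ Polynomial.X_ne_zero key
  refine ⟨hA', hB', hC', fun a b ha hb => ?_⟩
  rcases eq_or_lt_of_le (show ν ≤ b by omega) with h | h
  · exact h ▸ hBν a (by omega)
  · exact hD2 a b (by omega) h

lemma main (η ε : ℕ) (x y : ℕ → ℕ → ℝ) (ρ : Polynomial ℝ)
    (h1 : Cnd η ε (fun a b => X * C (x a b) + C (y a b)) ρ)
    (h2B : ∀ b, η < b → ∑ t ∈ Finset.range (ε+1), X^(ε-t) * (X * C (x t b) + C (y t b)) = 0)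
    (h2D : ∀ a b, ε < a → η < b → (X * C (x a b) + C (y a b) : Polynomial ℝ) = 0) :
    ∀ m, η ≤ m → m ≤ ε → Cnd m (ε+η-m) (fun a b => X * C (x a b) + C (y a b)) ρ := by
  have key : ∀ d, η + d ≤ ε → Cnd (η+d) (ε+η-(η+d)) (fun a b => X * C (x a b) + C (y a b)) ρ := by
    intro d
    induction d with
    | zero => intro _; rw [show ε+η-(η+0) = ε by omega]; exact h1
    | succ d ih =>
      intro hd
      have prev := ih (by omega)
      rw [show ε+η-(η+d) = (ε+η-(η+(d+1)))+1 by omega] at prev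
      have := step η ε (η+d) (ε+η-(η+(d+1))) x y ρ (by omega) (by omega) (by omega) prev h2B h2D
      rw [show η+(d+1) = η+d+1 by omega]
      exact this
  intro m hm hmε
  have := key (m - η) (by omega)
  rw [show η + (m - η) = m by omega] at this
  exact this

/-! ### Bridging layer -/

def xe (n k : ℕ) (A : Matrix (Fin k × Fin n) (Fin k × Fin n) ℝ)
    (ii jj : Fin n) (a b : ℕ) : ℝ :=
  if h : a < k ∧ b < k then A (⟨a, h.1⟩, ii) (⟨b, h.2⟩, jj) else 0

def Bij (n k : ℕ) (Lx Ly : Matrix (Fin k × Fin n) (Fin k × Fin n) ℝ)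
    (ii jj : Fin n) (a b : ℕ) : Polynomial ℝ :=
  X * C (xe n k Lx ii jj a b) + C (xe n k Ly ii jj a b)

lemma Bij_zero_left (n k : ℕ) (Lx Ly : Matrix (Fin k × Fin n) (Fin k × Fin n) ℝ)
    (ii jj : Fin n) (a b : ℕ) (ha : ¬ a < k) : Bij n k Lx Ly ii jj a b = 0 := by
  simp [Bij, xe, ha]

lemma Bij_zero_right (n k : ℕ) (Lx Ly : Matrix (Fin k × Fin n) (Fin k × Fin n) ℝ)
    (ii jj : Fin n) (a b : ℕ) (hb : ¬ b < k) : Bij n k Lx Ly ii jj a b = 0 := by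
  simp [Bij, xe, hb]

def rowAt {n k : ℕ} {γ : Type*} (N : Matrix (Fin k × Fin n) γ (Polynomial ℝ))
    (i : Fin n) (a : ℕ) (q : γ) : Polynomial ℝ :=
  if h : a < k then N (⟨a, h⟩, i) q else 0

def colAt {n k : ℕ} {ρ : Type*} (N : Matrix ρ (Fin k × Fin n) (Polynomial ℝ))
    (j : Fin n) (p : ρ) (b : ℕ) : Polynomial ℝ :=
  if h : b < k then N p (⟨b, h⟩, j) else 0

lemma mul_Eleft (n k η' : ℕ) {γ : Type*} (N : Matrix (Fin k × Fin n) γ (Polynomial ℝ))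
    (hη' : η' < k) (r : Fin (k - η')) (i : Fin n) (q : γ) :
    (Eleft n k η' * N) (r, i) q =
      if (r : ℕ) = 0 then ∑ a ∈ Finset.range (η'+1), X^(η'-a) * rowAt N i a q
      else rowAt N i (η' + (r : ℕ)) q := by
  rw [Matrix.mul_apply, Fintype.sum_prod_type]
  have hEl : ∀ (a : Fin k) (x : Fin n), Eleft n k η' (r, i) (a, x)
      = if i = x then (if (r:ℕ) = 0 ∧ (a:ℕ) ≤ η' then X^(η'-(a:ℕ))
          else if (a:ℕ) = η' + (r:ℕ) then 1 else 0) else 0 := by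
    intro a x
    by_cases h : i = x <;> simp [Eleft, h]
  have hinner : ∀ a : Fin k, (∑ x : Fin n, Eleft n k η' (r, i) (a, x) * N (a, x) q)
      = (if (r:ℕ) = 0 ∧ (a:ℕ) ≤ η' then X^(η'-(a:ℕ))
          else if (a:ℕ) = η' + (r:ℕ) then 1 else 0) * N (a, i) q := by
    intro a
    simp_rw [hEl, ite_mul, zero_mul]
    rw [Finset.sum_ite_eq]
    simp
  simp_rw [hinner]
  have hcast : (∑ a : Fin k, (if (r:ℕ) = 0 ∧ (a:ℕ) ≤ η' then X^(η'-(a:ℕ))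
          else if (a:ℕ) = η' + (r:ℕ) then 1 else 0) * N (a, i) q)
      = ∑ a ∈ Finset.range k, (if (r:ℕ) = 0 ∧ a ≤ η' then X^(η'-a)
          else if a = η' + (r:ℕ) then 1 else 0) * rowAt N i a q := by
    rw [← Fin.sum_univ_eq_sum_range]
    refine Finset.sum_congr rfl fun a _ => ?_
    rw [rowAt, dif_pos a.isLt]
  rw [hcast]
  by_cases hr : (r : ℕ) = 0
  · rw [if_pos hr]
    rw [← Finset.sum_subset (Finset.range_subset_range.mpr (show η'+1 ≤ k by omega))
      (fun a _ hna => by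
        rw [Finset.mem_range] at hna
        rw [if_neg (by omega), if_neg (by omega), zero_mul])]
    refine Finset.sum_congr rfl fun a ha => ?_
    rw [Finset.mem_range] at ha
    rw [if_pos ⟨hr, by omega⟩]
  · rw [if_neg hr]
    have : ∀ a ∈ Finset.range k, (if (r:ℕ) = 0 ∧ a ≤ η' then X^(η'-a)
          else if a = η' + (r:ℕ) then 1 else 0) * rowAt N i a q
        = if a = η' + (r:ℕ) then rowAt N i a q else 0 := by
      intro a _
      rw [if_neg (by tauto)]
      split_ifs <;> simp
    rw [Finset.sum_congr rfl this, Finset.sum_ite_eq' (Finset.range k) (η' + (r:ℕ))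
      (fun a => rowAt N i a q)]
    rw [if_pos (Finset.mem_range.mpr (by omega))]

lemma mul_Eright (n k η' ν : ℕ) (hν : η' + ν + 1 = k) {ρ : Type*}
    (N : Matrix ρ (Fin k × Fin n) (Polynomial ℝ)) (p : ρ) (c : Fin (η' + 1)) (j : Fin n) :
    (N * Eright n k η') p (c, j) =
      if (c : ℕ) = 0 then ∑ b ∈ Finset.range (ν+1), X^(ν-b) * colAt N j p b
      else colAt N j p (ν + (c : ℕ)) := by
  have hkν : k - 1 - η' = ν := by omega
  rw [Matrix.mul_apply, Fintype.sum_prod_type]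
  have hEr : ∀ (b : Fin k) (y : Fin n), Eright n k η' (b, y) (c, j)
      = if y = j then (if (c:ℕ) = 0 ∧ (b:ℕ) ≤ ν then X^(ν-(b:ℕ))
          else if (b:ℕ) = ν + (c:ℕ) then 1 else 0) else 0 := by
    intro b y
    by_cases h : y = j <;> simp [Eright, h, hkν]
  have hinner : ∀ b : Fin k, (∑ y : Fin n, N p (b, y) * Eright n k η' (b, y) (c, j))
      = N p (b, j) * (if (c:ℕ) = 0 ∧ (b:ℕ) ≤ ν then X^(ν-(b:ℕ))
          else if (b:ℕ) = ν + (c:ℕ) then 1 else 0) := by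
    intro b
    simp_rw [hEr, mul_ite, mul_zero]
    rw [Finset.sum_ite_eq']
    simp
  simp_rw [hinner]
  have hcast : (∑ b : Fin k, N p (b, j) * (if (c:ℕ) = 0 ∧ (b:ℕ) ≤ ν then X^(ν-(b:ℕ))
          else if (b:ℕ) = ν + (c:ℕ) then 1 else 0))
      = ∑ b ∈ Finset.range k, colAt N j p b * (if (c:ℕ) = 0 ∧ b ≤ ν then X^(ν-b)
          else if b = ν + (c:ℕ) then 1 else 0) := by
    rw [← Fin.sum_univ_eq_sum_range]
    refine Finset.sum_congr rfl fun b _ => ?_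
    rw [colAt, dif_pos b.isLt]
  rw [hcast]
  by_cases hc : (c : ℕ) = 0
  · rw [if_pos hc]
    rw [← Finset.sum_subset (Finset.range_subset_range.mpr (show ν+1 ≤ k by omega))
      (fun b _ hnb => by
        rw [Finset.mem_range] at hnb
        rw [if_neg (by omega), if_neg (by omega), mul_zero])]
    refine Finset.sum_congr rfl fun b hb => ?_
    rw [Finset.mem_range] at hb
    rw [if_pos ⟨hc, by omega⟩, mul_comm]
  · rw [if_neg hc]
    have : ∀ b ∈ Finset.range k, colAt N j p b * (if (c:ℕ) = 0 ∧ b ≤ ν then X^(ν-b)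
          else if b = ν + (c:ℕ) then 1 else 0)
        = if b = ν + (c:ℕ) then colAt N j p b else 0 := by
      intro b _
      rw [if_neg (by tauto)]
      split_ifs <;> simp
    rw [Finset.sum_congr rfl this, Finset.sum_ite_eq' (Finset.range k) (ν + (c:ℕ))
      (fun b => colAt N j p b)]
    rw [if_pos (Finset.mem_range.mpr (by omega))]

lemma tripleEntry (n k η' ν : ℕ) (hν : η' + ν + 1 = k)
    (Lx Ly : Matrix (Fin k × Fin n) (Fin k × Fin n) ℝ)
    (r : Fin (k - η')) (c : Fin (η' + 1)) (ii jj : Fin n) :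
    (Eleft n k η' * pencilM Lx Ly * Eright n k η') (r, ii) (c, jj) =
      if (c : ℕ) = 0 then ∑ b ∈ Finset.range (ν+1), X^(ν-b) *
        (if (r : ℕ) = 0 then ∑ a ∈ Finset.range (η'+1), X^(η'-a) * Bij n k Lx Ly ii jj a b
         else Bij n k Lx Ly ii jj (η' + (r : ℕ)) b)
      else (if (r : ℕ) = 0 then
          ∑ a ∈ Finset.range (η'+1), X^(η'-a) * Bij n k Lx Ly ii jj a (ν + (c : ℕ))
         else Bij n k Lx Ly ii jj (η' + (r : ℕ)) (ν + (c : ℕ))) := by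
  rw [mul_Eright n k η' ν hν]
  have hcol : ∀ b, b < k → colAt (Eleft n k η' * pencilM Lx Ly) jj (r, ii) b
      = (if (r : ℕ) = 0 then ∑ a ∈ Finset.range (η'+1), X^(η'-a) * Bij n k Lx Ly ii jj a b
         else Bij n k Lx Ly ii jj (η' + (r : ℕ)) b) := by
    intro b hb
    rw [colAt, dif_pos hb, mul_Eleft n k η' _ (by omega) r ii]
    have hrowAt : ∀ a, rowAt (pencilM Lx Ly) ii a (⟨b, hb⟩, jj) = Bij n k Lx Ly ii jj a b := by
      intro a
      by_cases ha : a < k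
      · rw [rowAt, dif_pos ha]
        simp [pencilM, Bij, xe, ha, hb]
      · rw [rowAt, dif_neg ha, Bij_zero_left n k Lx Ly ii jj a b ha]
    simp_rw [hrowAt]
  by_cases hc : (c : ℕ) = 0
  · rw [if_pos hc, if_pos hc]
    refine Finset.sum_congr rfl fun b hb => ?_
    rw [Finset.mem_range] at hb
    rw [hcol b (by omega)]
  · rw [if_neg hc, if_neg hc]
    rw [hcol (ν + (c:ℕ)) (by omega)]

lemma bridge (n k η' ν : ℕ) (hν : η' + ν + 1 = k)
    (Lx Ly : Matrix (Fin k × Fin n) (Fin k × Fin n) ℝ)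
    (Pc : ℕ → Matrix (Fin n) (Fin n) ℝ) (α : ℝ) :
    (Eleft n k η' * pencilM Lx Ly * Eright n k η' = GRHS n k η' α (polyOf n n k Pc)) ↔
    ∀ ii jj : Fin n, Cnd η' ν (Bij n k Lx Ly ii jj) (C α * polyOf n n k Pc ii jj) := by
  constructor
  · intro h ii jj
    have entry : ∀ (r : Fin (k - η')) (c : Fin (η'+1)),
        (Eleft n k η' * pencilM Lx Ly * Eright n k η') (r, ii) (c, jj)
          = (if (r:ℕ) = 0 ∧ (c:ℕ) = 0 then C α * polyOf n n k Pc ii jj else 0) := by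
      intro r c
      rw [h]; rfl
    refine ⟨?_, ?_, ?_, ?_⟩
    · have h0 := entry ⟨0, by omega⟩ ⟨0, by omega⟩
      rw [tripleEntry n k η' ν hν] at h0
      simp only [if_pos rfl] at h0
      rw [nestswap]
      simpa using h0
    · intro b hb
      by_cases hbk : b < k
      · have h0 := entry ⟨0, by omega⟩ ⟨b - ν, by omega⟩
        rw [tripleEntry n k η' ν hν] at h0
        simp only [show ¬ ((⟨b - ν, by omega⟩ : Fin (η'+1)) : ℕ) = 0 from by simp; omega,
          if_neg, if_pos rfl] at h0
        rw [show ν + (b - ν) = b by omega] at h0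
        simpa using h0
      · exact Finset.sum_eq_zero fun t _ => by
          rw [Bij_zero_right n k Lx Ly ii jj t b hbk, mul_zero]
    · intro a ha
      by_cases hak : a < k
      · have h0 := entry ⟨a - η', by omega⟩ ⟨0, by omega⟩
        rw [tripleEntry n k η' ν hν] at h0
        simp only [show ¬ ((⟨a - η', by omega⟩ : Fin (k - η')) : ℕ) = 0 from by simp; omega,
          if_neg, if_pos rfl] at h0
        rw [show η' + (a - η') = a by omega] at h0
        simpa using h0
      · exact Finset.sum_eq_zero fun s _ => by
          rw [Bij_zero_left n k Lx Ly ii jj a s hak, mul_zero]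
    · intro a b ha hb
      by_cases hak : a < k
      · by_cases hbk : b < k
        · have h0 := entry ⟨a - η', by omega⟩ ⟨b - ν, by omega⟩
          rw [tripleEntry n k η' ν hν] at h0
          simp only [show ¬ ((⟨b - ν, by omega⟩ : Fin (η'+1)) : ℕ) = 0 from by simp; omega,
            show ¬ ((⟨a - η', by omega⟩ : Fin (k - η')) : ℕ) = 0 from by simp; omega,
            if_neg] at h0
          rw [show η' + (a - η') = a by omega, show ν + (b - ν) = b by omega] at h0
          simpa using h0
        · exact Bij_zero_right n k Lx Ly ii jj a b hbk
      · exact Bij_zero_left n k Lx Ly ii jj a b hak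
  · intro H
    funext p q
    obtain ⟨r, ii⟩ := p
    obtain ⟨c, jj⟩ := q
    obtain ⟨hA, hB2, hC2, hD2⟩ := H ii jj
    rw [tripleEntry n k η' ν hν]
    show _ = if (r:ℕ) = 0 ∧ (c:ℕ) = 0 then C α * polyOf n n k Pc ii jj else 0
    by_cases hr : (r : ℕ) = 0 <;> by_cases hc : (c : ℕ) = 0
    · rw [if_pos hc, if_pos ⟨hr, hc⟩]
      simp only [if_pos hr]
      rw [← nestswap]
      exact hA
    · rw [if_neg hc, if_pos hr, if_neg (show ¬((r:ℕ) = 0 ∧ (c:ℕ) = 0) from fun h => hc h.2)]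
      exact hB2 (ν + (c:ℕ)) (by omega)
    · rw [if_pos hc, if_neg (by tauto)]
      simp only [if_neg hr]
      exact hC2 (η' + (r:ℕ)) (by omega)
    · rw [if_neg hc, if_neg hr, if_neg (show ¬((r:ℕ) = 0 ∧ (c:ℕ) = 0) from fun h => hr h.1)]
      exact hD2 (η' + (r:ℕ)) (ν + (c:ℕ)) (by omega) (by omega)

end Stmt13Aux

theorem stmt13 (n k ε η : ℕ) (hk : k = ε + η + 1) (hεη : η ≤ ε)
    (Pc : ℕ → Matrix (Fin n) (Fin n) ℝ) (hdeg : Pc k ≠ 0)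
    (Lx Ly : Matrix (Fin k × Fin n) (Fin k × Fin n) ℝ)
    (h₁ : memG n k η Pc (Lx, Ly)) (h₂ : memG n k (k - 1 - η) Pc (Lx, Ly)) :
    ∀ i : ℕ, 1 ≤ i → i ≤ k - 2 * η →
      ∃ α : ℝ,
        Eleft n k (η + i - 1) * pencilM Lx Ly * Eright n k (η + i - 1)
          = GRHS n k (η + i - 1) α (polyOf n n k Pc) := by
  intro i hi1 hi2
  obtain ⟨α₁, e1⟩ := h₁
  obtain ⟨α₂, e2⟩ := h₂
  have e1' : Eleft n k η * pencilM Lx Ly * Eright n k η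
      = GRHS n k η α₁ (polyOf n n k Pc) := e1
  have e2' : Eleft n k (k-1-η) * pencilM Lx Ly * Eright n k (k-1-η)
      = GRHS n k (k-1-η) α₂ (polyOf n n k Pc) := e2
  have hb1 := (Stmt13Aux.bridge n k η ε (by omega) Lx Ly Pc α₁).mp e1'
  have hb2 := (Stmt13Aux.bridge n k (k-1-η) η (by omega) Lx Ly Pc α₂).mp e2'
  rw [show k - 1 - η = ε by omega] at hb2
  refine ⟨α₁, (Stmt13Aux.bridge n k (η+i-1) (ε+η-(η+i-1)) (by omega) Lx Ly Pc α₁).mpr ?_⟩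
  intro ii jj
  exact Stmt13Aux.main η ε (Stmt13Aux.xe n k Lx ii jj) (Stmt13Aux.xe n k Ly ii jj)
    (C α₁ * polyOf n n k Pc ii jj) (hb1 ii jj) (hb2 ii jj).2.1 (hb2 ii jj).2.2.2
    (η+i-1) (by omega) (by omega)

end
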